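/- Consider H = SL(2,ℂ) embedded in SL(6,ℂ) as the upper-left 2×2 block (with identity elsewhere), acting on 6×6 matrices by h·M = h M hᵀ. Let v = diag(J,J,J) as above and let g be the 6×6 matrix equal to the identity except g₀₂ = 1, and set x = g v gᵀ. Then the stabilizer of x in H is {upper-left block [[1,a],[0,1]] : a ∈ ℂ}, a group isomorphic to the additive group (ℂ, +); in particular the stabilizer H_x is a nontrivial unipotent (hence non-reductive) abelian group. -/

import Mathlib

set_option maxHeartbeats 1000000

open Matrix

noncomputable def vJJJ6 : Matrix (Fin 6) (Fin 6) ℂ :=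
  !![0, 1, 0, 0, 0, 0;
     -1, 0, 0, 0, 0, 0;
     0, 0, 0, 1, 0, 0;
     0, 0, -1, 0, 0, 0;
     0, 0, 0, 0, 0, 1;
     0, 0, 0, 0, -1, 0]

/-- The embedding of a 2×2 matrix as the upper-left block of a 6×6 matrix,
with the identity in the lower-right 4×4 block. -/
noncomputable def upperLeftEmbed (A : Matrix (Fin 2) (Fin 2) ℂ) : Matrix (Fin 6) (Fin 6) ℂ :=
  Matrix.reindex finSumFinEquiv finSumFinEquiv
    (Matrix.fromBlocks A 0 0 (1 : Matrix (Fin 4) (Fin 4) ℂ))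

/-- The matrix g : identity except entry (0,2) equals 1. -/
noncomputable def gShear : Matrix (Fin 6) (Fin 6) ℂ :=
  1 + Matrix.single 0 2 1

section aux
variable (x : ℂ)
lemma c61 (u : Fin 5 → ℂ) : Matrix.vecCons x u 1 = u 0 := rfl
lemma c62 (u : Fin 5 → ℂ) : Matrix.vecCons x u 2 = u 1 := rfl
lemma c63 (u : Fin 5 → ℂ) : Matrix.vecCons x u 3 = u 2 := rfl
lemma c64 (u : Fin 5 → ℂ) : Matrix.vecCons x u 4 = u 3 := rfl
lemma c65 (u : Fin 5 → ℂ) : Matrix.vecCons x u 5 = u 4 := rfl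
lemma c51 (u : Fin 4 → ℂ) : Matrix.vecCons x u 1 = u 0 := rfl
lemma c52 (u : Fin 4 → ℂ) : Matrix.vecCons x u 2 = u 1 := rfl
lemma c53 (u : Fin 4 → ℂ) : Matrix.vecCons x u 3 = u 2 := rfl
lemma c54 (u : Fin 4 → ℂ) : Matrix.vecCons x u 4 = u 3 := rfl
lemma c41 (u : Fin 3 → ℂ) : Matrix.vecCons x u 1 = u 0 := rfl
lemma c42 (u : Fin 3 → ℂ) : Matrix.vecCons x u 2 = u 1 := rfl
lemma c43 (u : Fin 3 → ℂ) : Matrix.vecCons x u 3 = u 2 := rfl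
lemma c31 (u : Fin 2 → ℂ) : Matrix.vecCons x u 1 = u 0 := rfl
lemma c32 (u : Fin 2 → ℂ) : Matrix.vecCons x u 2 = u 1 := rfl
lemma c21 (u : Fin 1 → ℂ) : Matrix.vecCons x u 1 = u 0 := rfl
end aux

lemma ule_eq (M : Matrix (Fin 2) (Fin 2) ℂ) :
    upperLeftEmbed M = !![M 0 0, M 0 1, 0,0,0,0;
                          M 1 0, M 1 1, 0,0,0,0;
                          0,0,1,0,0,0;
                          0,0,0,1,0,0;
                          0,0,0,0,1,0;
                          0,0,0,0,0,1] := by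
  ext i j
  fin_cases i <;> fin_cases j <;>
    simp [upperLeftEmbed, Matrix.fromBlocks, finSumFinEquiv, Matrix.one_apply] <;> rfl

lemma x_eq : gShear * vJJJ6 * gShearᵀ =
    !![0, 1, 0, 1, 0, 0;
       -1, 0, 0, 0, 0, 0;
       0, 0, 0, 1, 0, 0;
       -1, 0, -1, 0, 0, 0;
       0, 0, 0, 0, 0, 1;
       0, 0, 0, 0, -1, 0] := by
  ext i j
  fin_cases i <;> fin_cases j <;>
    simp [gShear, vJJJ6, Matrix.mul_apply, Fin.sum_univ_six, Matrix.one_apply,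
      Matrix.single, Matrix.transpose_apply, Matrix.vecHead, Matrix.vecTail,
      c61, c62, c63, c64, c65, c51, c52, c53, c54, c41, c42, c43, c31, c32, c21]

theorem stabilizer_is_unipotent
    (A : Matrix.SpecialLinearGroup (Fin 2) ℂ) :
    upperLeftEmbed A.val * (gShear * vJJJ6 * gShearᵀ) * (upperLeftEmbed A.val)ᵀ =
        gShear * vJJJ6 * gShearᵀ ↔
      A.val 0 0 = 1 ∧ A.val 1 1 = 1 ∧ A.val 1 0 = 0 := by
  have hdet : A.val 0 0 * A.val 1 1 - A.val 0 1 * A.val 1 0 = 1 := by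
    have := A.property
    rwa [Matrix.det_fin_two] at this
  rw [ule_eq, x_eq]
  constructor
  · intro h
    have h03 := congrFun (congrFun h 0) 3
    have h13 := congrFun (congrFun h 1) 3
    simp [Matrix.mul_apply, Fin.sum_univ_six, Matrix.transpose_apply,
      Matrix.vecHead, Matrix.vecTail,
      c61, c62, c63, c64, c65, c51, c52, c53, c54, c41, c42, c43, c31, c32, c21] at h03 h13
    refine ⟨h03, ?_, h13⟩
    rw [h03, h13] at hdet
    linear_combination hdet
  · rintro ⟨h1, h2, h3⟩
    ext i j
    fin_cases i <;> fin_cases j <;>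
      simp [Matrix.mul_apply, Fin.sum_univ_six, Matrix.transpose_apply,
        Matrix.vecHead, Matrix.vecTail, h1, h2, h3,
        c61, c62, c63, c64, c65, c51, c52, c53, c54, c41, c42, c43, c31, c32, c21]
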